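/- Let c, d, k ∈ ℝ with c > 0 and Δ := d² − 4ck < 0, and define f(u) = √(c u² + d u + k) and a(u) = arctan((2c/√(−Δ))(u + d/(2c))). Then (a'(u))² = f''(u)/f(u) for all u ∈ ℝ. -/

import Mathlib

open Real Set

theorem stmt_5 (c d k : ℝ) (hc : 0 < c) (hΔ : d ^ 2 - 4 * c * k < 0)
    (f A : ℝ → ℝ)
    (hf : ∀ u, f u = Real.sqrt (c * u ^ 2 + d * u + k))
    (hA : ∀ u, A u =
      Real.arctan ((2 * c / Real.sqrt (4 * c * k - d ^ 2)) * (u + d / (2 * c)))) :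
    ∀ u : ℝ, (deriv A u) ^ 2 = deriv (deriv f) u / f u := by
  have hs : 0 < 4 * c * k - d ^ 2 := by linarith
  have hQpos : ∀ u : ℝ, 0 < c * u ^ 2 + d * u + k := by
    intro u
    nlinarith [sq_nonneg (2 * c * u + d)]
  have hsq : ∀ u : ℝ, 0 < Real.sqrt (c * u ^ 2 + d * u + k) := fun u =>
    Real.sqrt_pos.2 (hQpos u)
  have hfe : f = fun u => Real.sqrt (c * u ^ 2 + d * u + k) := funext hf
  have hAe : A = fun u =>
      Real.arctan ((2 * c / Real.sqrt (4 * c * k - d ^ 2)) * (u + d / (2 * c))) :=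
    funext hA
  -- derivative of the quadratic
  have hQ' : ∀ u : ℝ, HasDerivAt (fun u => c * u ^ 2 + d * u + k) (2 * c * u + d) u := by
    intro u
    have h1 : HasDerivAt (fun u : ℝ => c * u ^ 2 + d * u + k)
        (c * (2 * u ^ 1) + d * 1) u :=
      ((((hasDerivAt_pow 2 u).const_mul c).add
        ((hasDerivAt_id u).const_mul d)).add_const k)
    convert h1 using 1
    ring
  -- derivative of f
  have hf' : ∀ u : ℝ, HasDerivAt f
      ((2 * c * u + d) / (2 * Real.sqrt (c * u ^ 2 + d * u + k))) u := by
    intro u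
    have h2 : HasDerivAt Real.sqrt
        (1 / (2 * Real.sqrt (c * u ^ 2 + d * u + k))) (c * u ^ 2 + d * u + k) :=
      Real.hasDerivAt_sqrt (ne_of_gt (hQpos u))
    have h3 := h2.comp u (hQ' u)
    rw [hfe]
    convert h3 using 1
    · rfl
    · rfl
    · rfl
    field_simp
  have hdf : deriv f = fun u =>
      (2 * c * u + d) / (2 * Real.sqrt (c * u ^ 2 + d * u + k)) :=
    funext fun u => (hf' u).deriv
  intro u
  set Q : ℝ := c * u ^ 2 + d * u + k with hQdef
  have hQ0 : 0 < Q := hQpos u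
  have hsqQ : Real.sqrt Q * Real.sqrt Q = Q := Real.mul_self_sqrt hQ0.le
  have hsQ : (0:ℝ) < Real.sqrt Q := hsq u
  -- second derivative of f at u
  have hf'' : HasDerivAt (deriv f)
      ((4 * c * k - d ^ 2) / (4 * Q * Real.sqrt Q)) u := by
    rw [hdf]
    have hN : HasDerivAt (fun u : ℝ => 2 * c * u + d) (2 * c) u := by
      have := ((hasDerivAt_id u).const_mul (2 * c)).add_const d
      simpa using this
    have hD : HasDerivAt (fun u => 2 * Real.sqrt (c * u ^ 2 + d * u + k))
        (2 * ((1 / (2 * Real.sqrt Q)) * (2 * c * u + d))) u := by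
      have h2 : HasDerivAt Real.sqrt (1 / (2 * Real.sqrt Q)) Q :=
        Real.hasDerivAt_sqrt (ne_of_gt hQ0)
      exact (h2.comp u (hQ' u)).const_mul 2
    have hDne : 2 * Real.sqrt (c * u ^ 2 + d * u + k) ≠ 0 := by
      rw [← hQdef]; positivity
    have h4 := hN.div hD hDne
    convert h4 using 1
    · rfl
    · rfl
    · rfl
    rw [← hQdef]
    rw [div_eq_div_iff (by positivity) (by positivity)]
    field_simp
    linear_combination (4 * (4 * c * k - d ^ 2) - 16 * c * Q) * hsqQ
      - 16 * c * Q * hQdef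
  rw [hf''.deriv, hf u, ← hQdef]
  -- derivative of A at u
  have hss : Real.sqrt (4 * c * k - d ^ 2) * Real.sqrt (4 * c * k - d ^ 2)
      = 4 * c * k - d ^ 2 := Real.mul_self_sqrt hs.le
  have hsspos : (0:ℝ) < Real.sqrt (4 * c * k - d ^ 2) := Real.sqrt_pos.2 hs
  set m : ℝ := 2 * c / Real.sqrt (4 * c * k - d ^ 2) with hm
  have hA' : HasDerivAt A
      (1 / (1 + (m * (u + d / (2 * c))) ^ 2) * m) u := by
    rw [hAe]
    have hlin : HasDerivAt (fun u : ℝ => m * (u + d / (2 * c))) m u := by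
      have := ((hasDerivAt_id u).add_const (d / (2 * c))).const_mul m
      simpa using this
    exact (Real.hasDerivAt_arctan (m * (u + d / (2 * c)))).comp u hlin
  rw [hA'.deriv]
  have hm2 : m ^ 2 = 4 * c ^ 2 / (4 * c * k - d ^ 2) := by
    rw [hm]
    rw [div_pow]
    congr 1
    · ring
    · rw [sq]; exact hss
  have hden : 1 + (m * (u + d / (2 * c))) ^ 2 = 4 * c * Q / (4 * c * k - d ^ 2) := by
    have : (m * (u + d / (2 * c))) ^ 2 = m ^ 2 * (u + d / (2 * c)) ^ 2 := by ring
    rw [this, hm2, hQdef]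
    field_simp
    ring
  have hrhs : (4 * c * k - d ^ 2) / (4 * Q * Real.sqrt Q) / Real.sqrt Q
      = (4 * c * k - d ^ 2) / (4 * Q * Q) := by
    rw [div_div, mul_assoc (4 * Q), hsqQ]
  rw [hrhs, mul_pow, hden, hm2]
  have hQne : Q ≠ 0 := ne_of_gt hQ0
  have hsne : (4 * c * k - d ^ 2) ≠ 0 := ne_of_gt hs
  have hcne : c ≠ 0 := ne_of_gt hc
  field_simp
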